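/- Let (μ(t))_{t∈ℝ} and (ν(t))_{t∈ℝ} be two families of probability measures on a Hilbert space H, each with uniformly bounded second moments, satisfying the flow property μ(t) = P(t,s)μ(s) and ν(t) = P(t,s)ν(s) for all t ≥ s, where P(t,s) is a Markov transition operator with the contraction property d_{BL}(P(t,s)μ, P(t,s)ν) ≤ e^{−c(t−s)} W(μ,ν) for some c > 0 and W(μ,ν) := inf over couplings (X,Y) with laws μ,ν of (E‖X−Y‖²)^{1/2}, and suppose sup_t ∫‖x‖² dμ(t), sup_t ∫‖x‖² dν(t) < ∞. Then μ(t) = ν(t) for all t ∈ ℝ. -/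

import Mathlib

open MeasureTheory

variable {H : Type*} [NormedAddCommGroup H] [InnerProductSpace ℝ H] [CompleteSpace H]
  [SecondCountableTopology H] [MeasurableSpace H] [BorelSpace H]

/-- The bounded-Lipschitz distance
`d_{BL}(μ,ν) = sup{|∫φdμ − ∫φdν| : Lip(φ) + ‖φ‖_∞ ≤ 1}`. -/
noncomputable def dBL (μ ν : Measure H) : ℝ :=
  ⨆ φ : {φ : H → ℝ // ∃ K C : ℝ, 0 ≤ K ∧ LipschitzWith (Real.toNNReal K) φ ∧
      (∀ x, |φ x| ≤ C) ∧ K + C ≤ 1},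
    |(∫ x, φ.1 x ∂μ) - ∫ x, φ.1 x ∂ν|

/-- The `L²`-Wasserstein-type coupling distance
`W(μ,ν) = inf{(E‖X−Y‖²)^{1/2} : (X,Y) a coupling of μ, ν}`. -/
noncomputable def W2 (μ ν : Measure H) : ℝ :=
  ⨅ γ : {γ : Measure (H × H) // IsProbabilityMeasure γ ∧
      γ.map Prod.fst = μ ∧ γ.map Prod.snd = ν},
    (∫ q : H × H, ‖q.1 - q.2‖ ^ 2 ∂γ.1) ^ (1 / 2 : ℝ)

section Aux

lemma integrable_of_lip_bdd {μ : Measure H} [IsProbabilityMeasure μ]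
    {φ : H → ℝ} {K C : ℝ} (hL : LipschitzWith (Real.toNNReal K) φ)
    (hC : ∀ x, |φ x| ≤ C) : Integrable φ μ :=
  (integrable_const C).mono' hL.continuous.aestronglyMeasurable
    (Filter.Eventually.of_forall fun x => by
      rw [Real.norm_eq_abs]; exact hC x)

lemma dBL_bddAbove (μ ν : Measure H) [IsProbabilityMeasure μ] [IsProbabilityMeasure ν] :
    BddAbove (Set.range fun φ : {φ : H → ℝ // ∃ K C : ℝ, 0 ≤ K ∧
      LipschitzWith (Real.toNNReal K) φ ∧ (∀ x, |φ x| ≤ C) ∧ K + C ≤ 1} =>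
      |(∫ x, φ.1 x ∂μ) - ∫ x, φ.1 x ∂ν|) := by
  refine ⟨2, ?_⟩
  rintro r ⟨⟨φ, K, C, hK, hL, hC, hKC⟩, rfl⟩
  have hC1 : C ≤ 1 := by linarith
  have h1 : ‖∫ x, φ x ∂μ‖ ≤ C * (μ Set.univ).toReal :=
    norm_integral_le_of_norm_le_const (Filter.Eventually.of_forall fun x => by
      rw [Real.norm_eq_abs]; exact hC x)
  have h2 : ‖∫ x, φ x ∂ν‖ ≤ C * (ν Set.univ).toReal :=
    norm_integral_le_of_norm_le_const (Filter.Eventually.of_forall fun x => by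
      rw [Real.norm_eq_abs]; exact hC x)
  simp only [measure_univ, ENNReal.toReal_one, mul_one, Real.norm_eq_abs] at h1 h2
  calc |(∫ x, φ x ∂μ) - ∫ x, φ x ∂ν| ≤ |∫ x, φ x ∂μ| + |∫ x, φ x ∂ν| := abs_sub _ _
    _ ≤ C + C := add_le_add h1 h2
    _ ≤ 2 := by linarith

lemma dBL_nonneg (μ ν : Measure H) [IsProbabilityMeasure μ] [IsProbabilityMeasure ν] :
    0 ≤ dBL μ ν := by
  have h := le_ciSup (dBL_bddAbove μ ν)
    (⟨fun _ => (0 : ℝ), 0, 0, le_refl _, by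
      simpa using (LipschitzWith.const (0 : ℝ)), fun x => by simp, by norm_num⟩ :
      {φ : H → ℝ // ∃ K C : ℝ, 0 ≤ K ∧ LipschitzWith (Real.toNNReal K) φ ∧
        (∀ x, |φ x| ≤ C) ∧ K + C ≤ 1})
  simpa [dBL] using h

/-- If `dBL μ ν = 0`, the integrals of every bounded Lipschitz function agree. -/
lemma integral_eq_of_dBL_eq_zero {μ ν : Measure H}
    [IsProbabilityMeasure μ] [IsProbabilityMeasure ν] (h : dBL μ ν = 0)
    (φ : H → ℝ) (K C : ℝ) (hK : 0 ≤ K) (hL : LipschitzWith (Real.toNNReal K) φ)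
    (hC : ∀ x, |φ x| ≤ C) : ∫ x, φ x ∂μ = ∫ x, φ x ∂ν := by
  have hC0 : 0 ≤ C := le_trans (abs_nonneg _) (hC 0)
  set a : ℝ := (K + C + 1)⁻¹ with ha
  have hden : (0:ℝ) < K + C + 1 := by linarith
  have ha0 : 0 < a := inv_pos.mpr hden
  -- the rescaled function is admissible
  have hLψ : LipschitzWith (Real.toNNReal (a * K)) (fun x => a * φ x) := by
    refine LipschitzWith.of_dist_le_mul fun x y => ?_
    have := hL.dist_le_mul x y
    rw [Real.coe_toNNReal _ hK] at this
    rw [Real.coe_toNNReal _ (by positivity), Real.dist_eq]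
    calc |a * φ x - a * φ y| = a * |φ x - φ y| := by
          rw [← mul_sub, abs_mul, abs_of_pos ha0]
      _ ≤ a * (K * dist x y) := by
          apply mul_le_mul_of_nonneg_left _ ha0.le
          simpa [Real.dist_eq] using this
      _ = a * K * dist x y := by ring
  have hCψ : ∀ x, |a * φ x| ≤ a * C := fun x => by
    rw [abs_mul, abs_of_pos ha0]
    exact mul_le_mul_of_nonneg_left (hC x) ha0.le
  have hsum : a * K + a * C ≤ 1 := by
    rw [← mul_add]
    rw [ha]
    rw [inv_mul_le_iff₀ hden]
    linarith
  have hmem : |(∫ x, a * φ x ∂μ) - ∫ x, a * φ x ∂ν| ≤ dBL μ ν :=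
    le_ciSup (dBL_bddAbove μ ν)
      (⟨fun x => a * φ x, a * K, a * C, by positivity, hLψ, hCψ, hsum⟩ :
        {φ : H → ℝ // ∃ K C : ℝ, 0 ≤ K ∧ LipschitzWith (Real.toNNReal K) φ ∧
          (∀ x, |φ x| ≤ C) ∧ K + C ≤ 1})
  rw [h] at hmem
  have := abs_nonneg ((∫ x, a * φ x ∂μ) - ∫ x, a * φ x ∂ν)
  have heq : (∫ x, a * φ x ∂μ) = ∫ x, a * φ x ∂ν := by
    have : |(∫ x, a * φ x ∂μ) - ∫ x, a * φ x ∂ν| = 0 := le_antisymm hmem this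
    have := abs_eq_zero.mp this
    linarith
  rw [integral_const_mul, integral_const_mul] at heq
  exact mul_left_cancel₀ (ne_of_gt ha0) heq

/-- Two probability measures agreeing on all bounded Lipschitz functions are equal. -/
lemma ext_of_forall_lip_integral_eq {μ ν : Measure H}
    [IsProbabilityMeasure μ] [IsProbabilityMeasure ν]
    (h : ∀ (φ : H → ℝ) (K C : ℝ), 0 ≤ K → LipschitzWith (Real.toNNReal K) φ →
      (∀ x, |φ x| ≤ C) → ∫ x, φ x ∂μ = ∫ x, φ x ∂ν) : μ = ν := by
  have key : ∀ F : Set H, IsClosed F → μ F = ν F := by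
    intro F hF
    rcases F.eq_empty_or_nonempty with rfl | hne
    · simp
    -- Lipschitz approximations of the indicator of F
    set φ : ℕ → H → ℝ := fun n x => max 0 (1 - (n + 1) * Metric.infDist x F) with hφ
    have hφLip : ∀ n : ℕ, LipschitzWith (Real.toNNReal ((n : ℝ) + 1)) (φ n) := by
      intro n
      refine LipschitzWith.of_dist_le_mul fun x y => ?_
      rw [Real.coe_toNNReal _ (by positivity), Real.dist_eq]
      calc |φ n x - φ n y| ≤ |(1 - (n + 1) * Metric.infDist x F) -
              (1 - (n + 1) * Metric.infDist y F)| := by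
            simp only [hφ, max_comm (0:ℝ)]
            exact abs_max_sub_max_le_abs _ _ 0
        _ = ((n:ℝ) + 1) * |Metric.infDist x F - Metric.infDist y F| := by
            have harr : (1 - ((n:ℝ) + 1) * Metric.infDist x F) -
                (1 - ((n:ℝ) + 1) * Metric.infDist y F) =
                ((n:ℝ) + 1) * (Metric.infDist y F - Metric.infDist x F) := by ring
            rw [harr, abs_mul, abs_of_pos (show (0:ℝ) < (n:ℝ) + 1 by positivity),
              abs_sub_comm]
        _ ≤ ((n:ℝ) + 1) * dist x y := by
            apply mul_le_mul_of_nonneg_left _ (by positivity)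
            have := (Metric.lipschitz_infDist_pt F).dist_le_mul x y
            simpa [Real.dist_eq] using this
    have hφbd : ∀ n x, |φ n x| ≤ 1 := by
      intro n x
      rw [abs_of_nonneg (le_max_left _ _)]
      apply max_le zero_le_one
      have : 0 ≤ ((n:ℝ) + 1) * Metric.infDist x F :=
        mul_nonneg (by positivity) Metric.infDist_nonneg
      linarith
    have hmeas : ∀ n, AEStronglyMeasurable (φ n) (μ : Measure H) := fun n =>
      (hφLip n).continuous.aestronglyMeasurable
    have hmeasν : ∀ n, AEStronglyMeasurable (φ n) (ν : Measure H) := fun n =>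
      (hφLip n).continuous.aestronglyMeasurable
    have hbound : ∀ n, ∀ᵐ x ∂(μ : Measure H), ‖φ n x‖ ≤ (1:ℝ) :=
      fun n => Filter.Eventually.of_forall fun x => by
        rw [Real.norm_eq_abs]; exact hφbd n x
    have hboundν : ∀ n, ∀ᵐ x ∂(ν : Measure H), ‖φ n x‖ ≤ (1:ℝ) :=
      fun n => Filter.Eventually.of_forall fun x => by
        rw [Real.norm_eq_abs]; exact hφbd n x
    have hlim : ∀ x, Filter.Tendsto (fun n => φ n x) Filter.atTop
        (nhds (F.indicator (fun _ => (1:ℝ)) x)) := by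
      intro x
      by_cases hx : x ∈ F
      · have h0 : Metric.infDist x F = 0 :=
          (hF.mem_iff_infDist_zero hne).mp hx
        have : ∀ n : ℕ, φ n x = 1 := fun n => by simp [hφ, h0]
        simp only [Set.indicator_of_mem hx]
        simpa [this] using tendsto_const_nhds (α := ℝ) (f := Filter.atTop (α := ℕ))
      · have hr : 0 < Metric.infDist x F :=
          (hF.notMem_iff_infDist_pos hne).mp hx
        simp only [Set.indicator_of_notMem hx]
        have hev : ∀ᶠ n : ℕ in Filter.atTop, φ n x = 0 := by
          obtain ⟨N, hN⟩ := exists_nat_gt (Metric.infDist x F)⁻¹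
          refine Filter.eventually_atTop.mpr ⟨N, fun n hn => ?_⟩
          have h1 : (Metric.infDist x F)⁻¹ < (n:ℝ) + 1 := by
            have : (N:ℝ) ≤ (n:ℝ) := Nat.cast_le.mpr hn
            linarith
          have : 1 < ((n:ℝ) + 1) * Metric.infDist x F := by
            rw [inv_lt_iff_one_lt_mul₀ hr] at h1
            linarith [h1]
          simp only [hφ, max_eq_left_iff]
          linarith
        exact Filter.Tendsto.congr' (hev.mono fun n hn => hn.symm) tendsto_const_nhds
    have hμt : Filter.Tendsto (fun n => ∫ x, φ n x ∂μ) Filter.atTop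
        (nhds (∫ x, F.indicator (fun _ => (1:ℝ)) x ∂μ)) :=
      tendsto_integral_of_dominated_convergence _ hmeas (integrable_const 1) hbound
        (Filter.Eventually.of_forall hlim)
    have hνt : Filter.Tendsto (fun n => ∫ x, φ n x ∂ν) Filter.atTop
        (nhds (∫ x, F.indicator (fun _ => (1:ℝ)) x ∂ν)) :=
      tendsto_integral_of_dominated_convergence _ hmeasν (integrable_const 1) hboundν
        (Filter.Eventually.of_forall hlim)
    have heq : ∀ n, ∫ x, φ n x ∂μ = ∫ x, φ n x ∂ν := fun n =>
      h (φ n) ((n:ℝ) + 1) 1 (by positivity) (hφLip n) (hφbd n)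
    have hFeq : (∫ x, F.indicator (fun _ => (1:ℝ)) x ∂μ) =
        ∫ x, F.indicator (fun _ => (1:ℝ)) x ∂ν :=
      tendsto_nhds_unique (by simpa only [heq] using hμt) hνt
    rw [integral_indicator_const (1:ℝ) hF.measurableSet,
      integral_indicator_const (1:ℝ) hF.measurableSet, smul_eq_mul, smul_eq_mul,
      mul_one, mul_one] at hFeq
    exact (ENNReal.toReal_eq_toReal_iff' (measure_ne_top μ F) (measure_ne_top ν F)).mp hFeq
  have hgen : ‹MeasurableSpace H› = MeasurableSpace.generateFrom {s : Set H | IsClosed s} := by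
    rw [BorelSpace.measurable_eq (α := H), borel_eq_generateFrom_isClosed]
  exact ext_of_generate_finite _ hgen isPiSystem_isClosed
    (fun F hFc => key F hFc) (by simp [measure_univ])

lemma W2_nonneg (μ ν : Measure H) : 0 ≤ W2 μ ν :=
  Real.iInf_nonneg fun γ => Real.rpow_nonneg
    (integral_nonneg fun q => by positivity) _

lemma W2_le_of_moments {μ ν : Measure H}
    [IsProbabilityMeasure μ] [IsProbabilityMeasure ν] {M : ℝ}
    (hμint : Integrable (fun x : H => ‖x‖ ^ 2) μ)
    (hνint : Integrable (fun x : H => ‖x‖ ^ 2) ν)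
    (hμM : (∫ x, ‖x‖ ^ 2 ∂μ) ≤ M) (hνM : (∫ x, ‖x‖ ^ 2 ∂ν) ≤ M) :
    W2 μ ν ≤ (4 * M) ^ (1 / 2 : ℝ) := by
  set γ : Measure (H × H) := μ.prod ν with hγ
  have hfst : γ.map Prod.fst = μ := by
    rw [hγ, Measure.map_fst_prod]; simp
  have hsnd : γ.map Prod.snd = ν := by
    rw [hγ, Measure.map_snd_prod]; simp
  have hg1 : Integrable (fun q : H × H => ‖q.1‖ ^ 2) γ := by
    have := (integrable_map_measure
      (by rw [hfst]; exact hμint.aestronglyMeasurable)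
      measurable_fst.aemeasurable (f := Prod.fst) (g := fun x : H => ‖x‖ ^ 2)).mp
      (by rw [hfst]; exact hμint)
    exact this
  have hg2 : Integrable (fun q : H × H => ‖q.2‖ ^ 2) γ := by
    have := (integrable_map_measure
      (by rw [hsnd]; exact hνint.aestronglyMeasurable)
      measurable_snd.aemeasurable (f := Prod.snd) (g := fun x : H => ‖x‖ ^ 2)).mp
      (by rw [hsnd]; exact hνint)
    exact this
  have hgint : Integrable (fun q : H × H => 2 * ‖q.1‖ ^ 2 + 2 * ‖q.2‖ ^ 2) γ :=
    (hg1.const_mul 2).add (hg2.const_mul 2)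
  have hptw : ∀ q : H × H, ‖q.1 - q.2‖ ^ 2 ≤ 2 * ‖q.1‖ ^ 2 + 2 * ‖q.2‖ ^ 2 := by
    intro q
    have h1 : ‖q.1 - q.2‖ ≤ ‖q.1‖ + ‖q.2‖ := norm_sub_le _ _
    have h2 : (0:ℝ) ≤ ‖q.1 - q.2‖ := norm_nonneg _
    nlinarith [norm_nonneg q.1, norm_nonneg q.2, sq_nonneg (‖q.1‖ - ‖q.2‖),
      mul_self_le_mul_self h2 h1]
  have hfint : Integrable (fun q : H × H => ‖q.1 - q.2‖ ^ 2) γ := by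
    refine hgint.mono' ?_ (Filter.Eventually.of_forall fun q => ?_)
    · exact ((continuous_fst.sub continuous_snd).norm.pow 2).aestronglyMeasurable
    · rw [Real.norm_eq_abs, abs_of_nonneg (by positivity)]
      exact hptw q
  have hI : (∫ q : H × H, ‖q.1 - q.2‖ ^ 2 ∂γ) ≤ 4 * M := by
    have h1 : (∫ q : H × H, ‖q.1 - q.2‖ ^ 2 ∂γ) ≤
        ∫ q : H × H, (2 * ‖q.1‖ ^ 2 + 2 * ‖q.2‖ ^ 2) ∂γ :=
      integral_mono hfint hgint hptw
    have h2 : (∫ q : H × H, (2 * ‖q.1‖ ^ 2 + 2 * ‖q.2‖ ^ 2) ∂γ) =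
        2 * (∫ x, ‖x‖ ^ 2 ∂μ) + 2 * ∫ x, ‖x‖ ^ 2 ∂ν := by
      rw [integral_add (hg1.const_mul 2) (hg2.const_mul 2),
        integral_const_mul, integral_const_mul]
      rw [hγ, integral_fun_fst (f := fun x : H => ‖x‖ ^ 2),
        integral_fun_snd (f := fun x : H => ‖x‖ ^ 2)]
      simp
    rw [h2] at h1
    have h3 : (0:ℝ) ≤ ∫ x, ‖x‖ ^ 2 ∂μ := integral_nonneg fun x => by positivity
    linarith
  have hbdd : BddBelow (Set.range fun γ' : {γ' : Measure (H × H) //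
      IsProbabilityMeasure γ' ∧ γ'.map Prod.fst = μ ∧ γ'.map Prod.snd = ν} =>
      (∫ q : H × H, ‖q.1 - q.2‖ ^ 2 ∂γ'.1) ^ (1 / 2 : ℝ)) := by
    refine ⟨0, ?_⟩
    rintro r ⟨γ', rfl⟩
    exact Real.rpow_nonneg (integral_nonneg fun q => by positivity) _
  calc W2 μ ν ≤ (∫ q : H × H, ‖q.1 - q.2‖ ^ 2 ∂γ) ^ (1 / 2 : ℝ) :=
        ciInf_le hbdd (⟨γ, inferInstance, hfst, hsnd⟩ :
          {γ' : Measure (H × H) // IsProbabilityMeasure γ' ∧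
            γ'.map Prod.fst = μ ∧ γ'.map Prod.snd = ν})
    _ ≤ (4 * M) ^ (1 / 2 : ℝ) :=
        Real.rpow_le_rpow (integral_nonneg fun q => by positivity) hI (by norm_num)

end Aux

/-- Uniqueness of the `L²`-bounded flow of measures: if two measure-flows with
uniformly bounded second moments satisfy the same Markov flow property, and the
transition operator contracts `d_{BL}` against `W` at exponential rate `c > 0`,
then the two flows coincide. -/
theorem measure_flow_unique
    (μ ν : ℝ → Measure H)
    (hμp : ∀ t, IsProbabilityMeasure (μ t)) (hνp : ∀ t, IsProbabilityMeasure (ν t))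
    (P : ℝ → ℝ → Measure H → Measure H)
    (hflowμ : ∀ s t : ℝ, s ≤ t → μ t = P t s (μ s))
    (hflowν : ∀ s t : ℝ, s ≤ t → ν t = P t s (ν s))
    (c : ℝ) (hc : 0 < c)
    (hcontr : ∀ s t : ℝ, s ≤ t → ∀ μ' ν' : Measure H,
      IsProbabilityMeasure μ' → IsProbabilityMeasure ν' →
      dBL (P t s μ') (P t s ν') ≤ Real.exp (-c * (t - s)) * W2 μ' ν')
    (M : ℝ)
    (hμint : ∀ t, Integrable (fun x : H => ‖x‖ ^ 2) (μ t))
    (hνint : ∀ t, Integrable (fun x : H => ‖x‖ ^ 2) (ν t))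
    (hμM : ∀ t, (∫ x, ‖x‖ ^ 2 ∂μ t) ≤ M) (hνM : ∀ t, (∫ x, ‖x‖ ^ 2 ∂ν t) ≤ M) :
    ∀ t : ℝ, μ t = ν t := by
  intro t
  haveI := hμp t; haveI := hνp t
  set B : ℝ := (4 * M) ^ (1 / 2 : ℝ) with hB
  have hB0 : 0 ≤ B := Real.rpow_nonneg (by
    have : (0:ℝ) ≤ ∫ x, ‖x‖ ^ 2 ∂μ t := integral_nonneg fun x => by positivity
    nlinarith [hμM t]) _
  -- the key bound: for every s ≤ t,  dBL (μ t) (ν t) ≤ exp(-c(t-s)) * B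
  have hkey : ∀ s : ℝ, s ≤ t → dBL (μ t) (ν t) ≤ Real.exp (-c * (t - s)) * B := by
    intro s hst
    haveI := hμp s; haveI := hνp s
    have h1 : dBL (μ t) (ν t) ≤ Real.exp (-c * (t - s)) * W2 (μ s) (ν s) := by
      rw [hflowμ s t hst, hflowν s t hst]
      exact hcontr s t hst (μ s) (ν s) (hμp s) (hνp s)
    have h2 : W2 (μ s) (ν s) ≤ B :=
      W2_le_of_moments (hμint s) (hνint s) (hμM s) (hνM s)
    calc dBL (μ t) (ν t) ≤ Real.exp (-c * (t - s)) * W2 (μ s) (ν s) := h1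
      _ ≤ Real.exp (-c * (t - s)) * B :=
        mul_le_mul_of_nonneg_left h2 (Real.exp_pos _).le
  -- dBL (μ t) (ν t) ≤ ε for every ε > 0
  have hle : ∀ ε : ℝ, 0 < ε → dBL (μ t) (ν t) ≤ ε := by
    intro ε hε
    set L : ℝ := Real.log ((B + 1) / ε) with hL
    set s : ℝ := t - (1 + |L| / c) with hs
    have hst : s ≤ t := by
      rw [hs]
      have : 0 ≤ |L| / c := div_nonneg (abs_nonneg _) hc.le
      linarith
    have hexp : Real.exp (-c * (t - s)) ≤ ε / (B + 1) := by
      have hts : t - s = 1 + |L| / c := by rw [hs]; ring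
      have harg : -c * (t - s) ≤ -L := by
        rw [hts]
        have h1 : -c * (1 + |L| / c) = -c - |L| := by
          field_simp
          ring
        rw [h1]
        have := le_abs_self L
        linarith
      calc Real.exp (-c * (t - s)) ≤ Real.exp (-L) := Real.exp_le_exp.mpr harg
        _ = ε / (B + 1) := by
          rw [hL, ← Real.log_inv, Real.exp_log]
          · rw [inv_div]
          · positivity
    have hW0 : 0 ≤ B := hB0
    calc dBL (μ t) (ν t) ≤ Real.exp (-c * (t - s)) * B := hkey s hst
      _ ≤ (ε / (B + 1)) * B :=
          mul_le_mul_of_nonneg_right hexp hB0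
      _ ≤ ε := by
          rw [div_mul_eq_mul_div, div_le_iff₀ (by positivity)]
          nlinarith
  have hd0 : dBL (μ t) (ν t) = 0 := by
    refine le_antisymm ?_ (dBL_nonneg _ _)
    by_contra hpos
    push_neg at hpos
    have := hle (dBL (μ t) (ν t) / 2) (by linarith)
    linarith
  exact ext_of_forall_lip_integral_eq fun φ K C hK hL hC =>
    integral_eq_of_dBL_eq_zero hd0 φ K C hK hL hC
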